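/- arXiv:1609.08745 — 4 statements merged into one kernel-verified Lean document; each statement's English description precedes it below -/
import Mathlib

section
/- Let θ be a complex number, a, q ∈ ℤ[i] with q ≠ 0 and gcd(a,q) = 1, and suppose θ = a/q + γ where |γ| ≤ C|q|^{-2} with C := 2 + √2. Then for all n₁, n₂ ∈ ℤ[i] with n₁ ≢ n₂ (mod q), one has ‖n₁θ − n₂θ‖ ≥ 1/(√2·|q|) − C·|n₁ − n₂|/|q|². -/
/-- Distance from a real number to the nearest integer. -/
noncomputable def dInt (t : ℝ) : ℝ := min (Int.fract t) (1 - Int.fract t)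

/-- Distance from a complex number to the nearest Gaussian integer in the supremum norm. -/
noncomputable def dGauss (z : ℂ) : ℝ := max (dInt z.re) (dInt z.im)

/-- The complex absolute value of a Gaussian integer. -/
noncomputable def absG (n : GaussianInt) : ℝ := ‖GaussianInt.toComplex n‖

lemma one_le_absG {x : GaussianInt} (hx : x ≠ 0) : 1 ≤ absG x := by
  have h2 : (1:ℝ) ≤ Complex.normSq (GaussianInt.toComplex x) := by
    rw [Complex.normSq_apply]
    have : (1:ℤ) ≤ x.re * x.re + x.im * x.im := by
      have h : x.re ≠ 0 ∨ x.im ≠ 0 := by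
        by_contra hc; push_neg at hc; exact hx (Zsqrtd.ext_iff.mpr ⟨hc.1, hc.2⟩)
      rcases h with h | h
      · nlinarith [mul_self_nonneg x.im, Int.one_le_abs h, abs_mul_abs_self x.re]
      · nlinarith [mul_self_nonneg x.re, Int.one_le_abs h, abs_mul_abs_self x.im]
    calc (1:ℝ) ≤ ((x.re * x.re + x.im * x.im : ℤ) : ℝ) := by exact_mod_cast this
    _ = _ := by
        rw [GaussianInt.toComplex_def₂]
        show ((x.re * x.re + x.im * x.im : ℤ) : ℝ)
          = (x.re : ℝ) * (x.re : ℝ) + (x.im : ℝ) * (x.im : ℝ)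
        push_cast
        ring
  have := Complex.sq_norm (GaussianInt.toComplex x)
  unfold absG
  nlinarith [norm_nonneg (GaussianInt.toComplex x)]

lemma abs_le_sqrt_two_mul_dGauss (z : ℂ) :
    ∃ n : GaussianInt, ‖z - GaussianInt.toComplex n‖ ≤ Real.sqrt 2 * dGauss z := by
  refine ⟨⟨round z.re, round z.im⟩, ?_⟩
  have hre : (z - GaussianInt.toComplex ⟨round z.re, round z.im⟩).re = z.re - round z.re := by
    simp [GaussianInt.toComplex_def']
  have him : (z - GaussianInt.toComplex ⟨round z.re, round z.im⟩).im = z.im - round z.im := by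
    simp [GaussianInt.toComplex_def']
  have hdre : |z.re - round z.re| = dInt z.re := abs_sub_round_eq_min z.re
  have hdim : |z.im - round z.im| = dInt z.im := abs_sub_round_eq_min z.im
  have hM : dGauss z = max (dInt z.re) (dInt z.im) := rfl
  rw [Complex.norm_def, Complex.normSq_apply, hre, him]
  have h1 : |z.re - round z.re| ≤ dGauss z := hdre ▸ le_max_left _ _
  have h2 : |z.im - round z.im| ≤ dGauss z := hdim ▸ le_max_right _ _
  have h0 : 0 ≤ dGauss z := le_trans (abs_nonneg _) h1
  have : (z.re - round z.re) * (z.re - round z.re) + (z.im - round z.im) * (z.im - round z.im)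
      ≤ 2 * dGauss z ^ 2 := by nlinarith [abs_mul_abs_self (z.re - round z.re), abs_mul_abs_self (z.im - round z.im), abs_nonneg (z.re - round z.re), abs_nonneg (z.im - round z.im)]
  calc Real.sqrt _ ≤ Real.sqrt (2 * dGauss z ^ 2) := Real.sqrt_le_sqrt this
  _ = Real.sqrt 2 * dGauss z := by
      rw [Real.sqrt_mul (by norm_num), Real.sqrt_sq h0]

theorem spacing_lower_bound (θ : ℂ) (a q : GaussianInt) (hq : q ≠ 0) (hcop : IsCoprime a q)
    (hγ : ‖θ - GaussianInt.toComplex a / GaussianInt.toComplex q‖ ≤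
      (2 + Real.sqrt 2) / absG q ^ 2)
    (n₁ n₂ : GaussianInt) (hn : ¬ q ∣ (n₁ - n₂)) :
    1 / (Real.sqrt 2 * absG q) - (2 + Real.sqrt 2) * absG (n₁ - n₂) / absG q ^ 2 ≤
      dGauss (GaussianInt.toComplex n₁ * θ - GaussianInt.toComplex n₂ * θ) := by
  set m := n₁ - n₂ with hm
  set C := 2 + Real.sqrt 2 with hC
  have hqc : GaussianInt.toComplex q ≠ 0 := by
    simpa [GaussianInt.toComplex_eq_zero] using hq
  have hq1 : (1:ℝ) ≤ absG q := one_le_absG hq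
  have hq0 : (0:ℝ) < absG q := lt_of_lt_of_le one_pos hq1
  have hz : GaussianInt.toComplex n₁ * θ - GaussianInt.toComplex n₂ * θ
      = GaussianInt.toComplex m * θ := by
    rw [hm, GaussianInt.toComplex_sub]; ring
  rw [hz]
  set z := GaussianInt.toComplex m * θ with hzdef
  obtain ⟨n₀, hn₀⟩ := abs_le_sqrt_two_mul_dGauss z
  -- lower bound |z - n₀|
  have key : 1 / absG q - C * absG m / absG q ^ 2 ≤ ‖z - GaussianInt.toComplex n₀‖ := by
    have hA : 1 / absG q ≤ ‖
        (GaussianInt.toComplex m * (GaussianInt.toComplex a / GaussianInt.toComplex q)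
          - GaussianInt.toComplex n₀)‖ := by
      have hne : m * a - n₀ * q ≠ 0 := by
        intro h
        apply hn
        have hdvd : q ∣ m * a := ⟨n₀, by linear_combination (norm := ring_nf) h⟩
        exact (hcop.symm).dvd_of_dvd_mul_right hdvd
      have h1 : 1 ≤ absG (m * a - n₀ * q) := one_le_absG hne
      have heq : GaussianInt.toComplex m * (GaussianInt.toComplex a / GaussianInt.toComplex q)
          - GaussianInt.toComplex n₀
          = GaussianInt.toComplex (m * a - n₀ * q) / GaussianInt.toComplex q := by
        simp only [map_sub, map_mul]
        field_simp
      rw [heq, norm_div]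
      show 1 / absG q ≤ absG (m * a - n₀ * q) / absG q
      rw [div_le_div_iff₀ hq0 hq0]
      nlinarith [h1]
    have hB : ‖(GaussianInt.toComplex m *
        (θ - GaussianInt.toComplex a / GaussianInt.toComplex q))‖ ≤ C * absG m / absG q ^ 2 := by
      rw [norm_mul]
      have : ‖GaussianInt.toComplex m‖ = absG m := rfl
      rw [this]
      have hm0 : 0 ≤ absG m := norm_nonneg _
      calc absG m * ‖θ - GaussianInt.toComplex a / GaussianInt.toComplex q‖
          ≤ absG m * (C / absG q ^ 2) := by
            exact mul_le_mul_of_nonneg_left hγ hm0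
      _ = C * absG m / absG q ^ 2 := by ring
    have hsplit : z - GaussianInt.toComplex n₀ =
        (GaussianInt.toComplex m * (GaussianInt.toComplex a / GaussianInt.toComplex q)
          - GaussianInt.toComplex n₀)
        + GaussianInt.toComplex m * (θ - GaussianInt.toComplex a / GaussianInt.toComplex q) := by
      rw [hzdef]; ring
    calc 1 / absG q - C * absG m / absG q ^ 2
        ≤ ‖(GaussianInt.toComplex m * (GaussianInt.toComplex a / GaussianInt.toComplex q)
            - GaussianInt.toComplex n₀)‖
          - ‖(GaussianInt.toComplex m *
            (θ - GaussianInt.toComplex a / GaussianInt.toComplex q))‖ := by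
          linarith
    _ ≤ _ := by
        rw [hsplit]
        have := norm_add_le (GaussianInt.toComplex m * (GaussianInt.toComplex a / GaussianInt.toComplex q)
            - GaussianInt.toComplex n₀ + GaussianInt.toComplex m *
            (θ - GaussianInt.toComplex a / GaussianInt.toComplex q))
            (-(GaussianInt.toComplex m * (θ - GaussianInt.toComplex a / GaussianInt.toComplex q)))
        simp only [add_neg_cancel_right, norm_neg] at this
        linarith
  -- combine
  have hs2 : (1:ℝ) ≤ Real.sqrt 2 := by
    nlinarith [Real.sq_sqrt (by norm_num : (2:ℝ) ≥ 0) , Real.sqrt_nonneg 2]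
  have hs2' : (0:ℝ) < Real.sqrt 2 := lt_of_lt_of_le one_pos hs2
  have hm0 : 0 ≤ absG m := norm_nonneg _
  have hC0 : 0 ≤ C := by rw [hC]; positivity
  have hfin : 1 / absG q - C * absG m / absG q ^ 2 ≤ Real.sqrt 2 * dGauss z :=
    le_trans key hn₀
  rw [one_div, mul_inv, ← one_div, ← one_div]
  have h1 : (1 / Real.sqrt 2) * (1 / absG q - C * absG m / absG q ^ 2) ≤ dGauss z := by
    rw [div_mul_eq_mul_div, one_mul, div_le_iff₀ hs2']
    linarith [hfin]
  have h2 : 1 / Real.sqrt 2 * (1/ absG q) - C * absG m / absG q ^ 2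
      ≤ (1 / Real.sqrt 2) * (1 / absG q - C * absG m / absG q ^ 2) := by
    have : (1 / Real.sqrt 2) * (C * absG m / absG q ^ 2) ≤ C * absG m / absG q ^ 2 := by
      have : 1 / Real.sqrt 2 ≤ 1 := by
        rw [div_le_one hs2']; exact hs2
      have hnn : 0 ≤ C * absG m / absG q ^ 2 := by positivity
      nlinarith
    ring_nf
    ring_nf at this
    linarith
  calc 1 / Real.sqrt 2 * (1 / absG q) - C * absG m / absG q ^ 2 ≤ _ := le_trans h2 h1
end

section
/- Let θ be a complex number, a, q ∈ ℤ[i] with q ≠ 0 and gcd(a,q) = 1, and suppose θ = a/q + γ where |γ| ≤ C|q|^{-2} with C := 2 + √2. Then for every n ∈ ℤ[i] with 0 < N(n) ≤ |q|²/(8C²), one has ‖nθ‖ ≥ 1/(√8·|q|). -/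
/-- The norm `N(n) = |n|²` of a Gaussian integer, as a real number. -/
noncomputable def Nm (n : GaussianInt) : ℝ := ‖GaussianInt.toComplex n‖ ^ 2

lemma dInt_eq_round (t : ℝ) : dInt t = |t - round t| := (abs_sub_round_eq_min t).symm

lemma dInt_le (t : ℝ) (m : ℤ) : dInt t ≤ |t - m| := by
  rw [dInt_eq_round]; exact round_le t m

lemma dInt_nonneg (t : ℝ) : 0 ≤ dInt t := by rw [dInt_eq_round]; positivity

lemma dGauss_nonneg (z : ℂ) : 0 ≤ dGauss z :=
  le_trans (dInt_nonneg z.re) (le_max_left _ _)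

lemma dGauss_lower (z : ℂ) (c : ℝ)
    (h : ∀ g : GaussianInt, c ≤ ‖z - GaussianInt.toComplex g‖) :
    c ≤ Real.sqrt 2 * dGauss z := by
  set g : GaussianInt := ⟨round z.re, round z.im⟩ with hg
  have hre : (GaussianInt.toComplex g).re = ((round z.re : ℤ) : ℝ) := by simp [hg]
  have him : (GaussianInt.toComplex g).im = ((round z.im : ℤ) : ℝ) := by simp [hg]
  have h1 : |z.re - ((round z.re : ℤ) : ℝ)| ≤ dGauss z := by
    rw [show ((round z.re : ℤ) : ℝ) = ((round z.re : ℤ) : ℝ) from rfl]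
    have : dInt z.re = |z.re - round z.re| := dInt_eq_round z.re
    calc |z.re - ((round z.re : ℤ) : ℝ)| = dInt z.re := this.symm
      _ ≤ dGauss z := le_max_left _ _
  have h2 : |z.im - ((round z.im : ℤ) : ℝ)| ≤ dGauss z := by
    calc |z.im - ((round z.im : ℤ) : ℝ)| = dInt z.im := (dInt_eq_round z.im).symm
      _ ≤ dGauss z := le_max_right _ _
  have hsq : ‖z - GaussianInt.toComplex g‖ ^ 2 ≤ 2 * dGauss z ^ 2 := by
    rw [Complex.sq_norm, Complex.normSq_apply, Complex.sub_re, Complex.sub_im, hre, him]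
    have e1 : (z.re - ((round z.re : ℤ) : ℝ)) * (z.re - ((round z.re : ℤ) : ℝ))
        ≤ dGauss z ^ 2 := by
      have := sq_abs (z.re - ((round z.re : ℤ) : ℝ))
      nlinarith [h1, abs_nonneg (z.re - ((round z.re : ℤ) : ℝ)), dGauss_nonneg z]
    have e2 : (z.im - ((round z.im : ℤ) : ℝ)) * (z.im - ((round z.im : ℤ) : ℝ))
        ≤ dGauss z ^ 2 := by
      have := sq_abs (z.im - ((round z.im : ℤ) : ℝ))
      nlinarith [h2, abs_nonneg (z.im - ((round z.im : ℤ) : ℝ)), dGauss_nonneg z]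
    linarith
  have habs : ‖z - GaussianInt.toComplex g‖ ≤ Real.sqrt 2 * dGauss z := by
    have : ‖z - GaussianInt.toComplex g‖
        = Real.sqrt (‖z - GaussianInt.toComplex g‖ ^ 2) := by
      rw [Real.sqrt_sq (norm_nonneg _)]
    rw [this]
    calc Real.sqrt (‖z - GaussianInt.toComplex g‖ ^ 2)
        ≤ Real.sqrt (2 * dGauss z ^ 2) := Real.sqrt_le_sqrt hsq
      _ = Real.sqrt 2 * dGauss z := by
          rw [Real.sqrt_mul (by norm_num), Real.sqrt_sq (dGauss_nonneg z)]
  exact le_trans (h g) habs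

lemma dGauss_lipschitz (z w : ℂ) : dGauss z ≤ dGauss w + ‖z - w‖ := by
  have key : ∀ s t : ℝ, |s - t| ≤ ‖z - w‖ →
      dInt s ≤ dInt t + ‖z - w‖ := by
    intro s t hst
    calc dInt s ≤ |s - round t| := dInt_le s (round t)
      _ ≤ |s - t| + |t - round t| := by
          have := abs_sub_abs_le_abs_sub (s - round t) (s - t)
          calc |s - round t| = |(s - t) + (t - round t)| := by ring_nf
            _ ≤ |s - t| + |t - round t| := abs_add_le _ _
      _ ≤ ‖z - w‖ + dInt t := by
          rw [dInt_eq_round t]; linarith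
      _ = dInt t + ‖z - w‖ := by ring
  have hre : |z.re - w.re| ≤ ‖z - w‖ := by
    have := Complex.abs_re_le_norm (z - w); simpa using this
  have him : |z.im - w.im| ≤ ‖z - w‖ := by
    have := Complex.abs_im_le_norm (z - w); simpa using this
  have l1 := key z.re w.re hre
  have l2 := key z.im w.im him
  unfold dGauss
  apply max_le
  · exact le_trans l1 (by gcongr; exact le_max_left _ _)
  · exact le_trans l2 (by gcongr; exact le_max_right _ _)

lemma Nm_mul (x y : GaussianInt) : Nm (x * y) = Nm x * Nm y := by
  unfold Nm; rw [map_mul, norm_mul, mul_pow]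

lemma one_le_Nm {d : GaussianInt} (hd : d ≠ 0) : 1 ≤ Nm d := by
  have hNm : Nm d = ((d.re ^ 2 + d.im ^ 2 : ℤ) : ℝ) := by
    unfold Nm
    rw [Complex.sq_norm, Complex.normSq_apply, ← GaussianInt.intCast_re,
      ← GaussianInt.intCast_im]
    push_cast; ring
  rw [hNm]
  have : (1 : ℤ) ≤ d.re ^ 2 + d.im ^ 2 := by
    by_contra h
    push_neg at h
    have hre : d.re = 0 := by nlinarith [sq_nonneg d.re, sq_nonneg d.im]
    have him : d.im = 0 := by nlinarith [sq_nonneg d.re, sq_nonneg d.im]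
    apply hd
    have : d = ⟨0, 0⟩ := by rw [Zsqrtd.ext_iff]; exact ⟨hre, him⟩
    exact this
  exact_mod_cast this

lemma one_le_absG_s10 {d : GaussianInt} (hd : d ≠ 0) : 1 ≤ absG d := by
  have h := one_le_Nm hd
  have heq : Nm d = absG d ^ 2 := rfl
  rw [heq] at h
  have h0 : 0 ≤ absG d := norm_nonneg (GaussianInt.toComplex d)
  nlinarith [h, h0]

set_option maxHeartbeats 1000000 in
theorem small_norm_lower_bound (θ : ℂ) (a q : GaussianInt) (hq : q ≠ 0) (hcop : IsCoprime a q)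
    (hγ : ‖θ - GaussianInt.toComplex a / GaussianInt.toComplex q‖ ≤
      (2 + Real.sqrt 2) / absG q ^ 2)
    (n : GaussianInt) (hn0 : 0 < Nm n)
    (hnz : Nm n ≤ absG q ^ 2 / (8 * (2 + Real.sqrt 2) ^ 2)) :
    1 / (Real.sqrt 8 * absG q) ≤ dGauss (GaussianInt.toComplex n * θ) := by
  have s2 : Real.sqrt 2 ^ 2 = 2 := Real.sq_sqrt (by norm_num)
  have s2pos : (0:ℝ) < Real.sqrt 2 := Real.sqrt_pos.mpr (by norm_num)
  have s8 : Real.sqrt 8 = 2 * Real.sqrt 2 := by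
    rw [show (8:ℝ) = 2 ^ 2 * 2 by norm_num, Real.sqrt_mul (by positivity),
      Real.sqrt_sq (by norm_num)]
  set C : ℝ := 2 + Real.sqrt 2 with hCdef
  have hC : (0:ℝ) < C := by positivity
  set Q : ℝ := absG q with hQdef
  have hqC : GaussianInt.toComplex q ≠ 0 := by
    simpa [GaussianInt.toComplex_eq_zero] using hq
  have hQ : 0 < Q := by
    have : 0 < ‖GaussianInt.toComplex q‖ :=
      norm_pos_iff.mpr hqC
    simpa [hQdef, absG] using this
  set A : ℝ := absG n with hAdef
  have hAsq : A ^ 2 = Nm n := rfl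
  have hA0 : 0 ≤ A := norm_nonneg _
  have hnne : n ≠ 0 := by
    intro h
    rw [h] at hn0
    simp [Nm] at hn0
  -- q does not divide n * a
  have hndvd : ∀ g : GaussianInt, n * a - g * q ≠ 0 := by
    intro g hzero
    have hdvd : q ∣ n * a := ⟨g, by linear_combination (norm := ring_nf) hzero⟩
    have hqn : q ∣ n := (hcop.symm).dvd_of_dvd_mul_right hdvd
    obtain ⟨d, hd⟩ := hqn
    have hdne : d ≠ 0 := by
      intro h; rw [h, mul_zero] at hd; exact hnne hd
    have : Nm q ≤ Nm n := by
      rw [hd, Nm_mul]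
      nlinarith [one_le_Nm hdne, one_le_Nm hq, hn0]
    have hNq : Nm q = Q ^ 2 := rfl
    have h8 : (1:ℝ) < 8 * C ^ 2 := by nlinarith [Real.sqrt_nonneg 2]
    have hnz' := hnz
    rw [le_div_iff₀ (by positivity)] at hnz'
    nlinarith [hn0, h8, hnz', this, hNq]
  -- the rational point
  set α : ℂ := GaussianInt.toComplex (n * a) / GaussianInt.toComplex q with hα
  have hlow : ∀ g : GaussianInt, 1 / Q ≤ ‖α - GaussianInt.toComplex g‖ := by
    intro g
    have heq : α - GaussianInt.toComplex g
        = GaussianInt.toComplex (n * a - g * q) / GaussianInt.toComplex q := by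
      rw [hα, map_sub, map_mul]
      field_simp
      rw [map_mul]; ring
    rw [heq, norm_div]
    have h1 : 1 ≤ ‖GaussianInt.toComplex (n * a - g * q)‖ :=
      one_le_absG_s10 (hndvd g)
    have hQ' : ‖GaussianInt.toComplex q‖ = Q := rfl
    rw [hQ']
    exact div_le_div_of_nonneg_right h1 hQ.le
  have hdα : 1 / Q ≤ Real.sqrt 2 * dGauss α := dGauss_lower α _ hlow
  -- perturbation bound
  have hpert : ‖GaussianInt.toComplex n * θ - α‖ ≤ A * (C / Q ^ 2) := by
    have : GaussianInt.toComplex n * θ - α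
        = GaussianInt.toComplex n *
          (θ - GaussianInt.toComplex a / GaussianInt.toComplex q) := by
      rw [hα]; push_cast [map_mul]; field_simp
    rw [this, norm_mul]
    exact mul_le_mul_of_nonneg_left hγ hA0
  -- A ≤ Q / (2 √2 C)
  have hAle : A ≤ Q / (2 * Real.sqrt 2 * C) := by
    have hB : (0:ℝ) < Q / (2 * Real.sqrt 2 * C) := by positivity
    have hsq : A ^ 2 ≤ (Q / (2 * Real.sqrt 2 * C)) ^ 2 := by
      rw [hAsq]
      calc Nm n ≤ Q ^ 2 / (8 * C ^ 2) := hnz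
        _ = (Q / (2 * Real.sqrt 2 * C)) ^ 2 := by
            rw [div_pow]
            congr 1
            nlinarith [s2]
    nlinarith [hA0, hB, hsq]
  have hpert2 : ‖GaussianInt.toComplex n * θ - α‖
      ≤ 1 / (2 * Real.sqrt 2 * Q) := by
    calc ‖GaussianInt.toComplex n * θ - α‖ ≤ A * (C / Q ^ 2) := hpert
      _ ≤ (Q / (2 * Real.sqrt 2 * C)) * (C / Q ^ 2) := by
          apply mul_le_mul_of_nonneg_right hAle (by positivity)
      _ = 1 / (2 * Real.sqrt 2 * Q) := by
          field_simp
  -- Lipschitz transfer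
  have hlip : dGauss α ≤ dGauss (GaussianInt.toComplex n * θ)
      + ‖GaussianInt.toComplex n * θ - α‖ := by
    have := dGauss_lipschitz α (GaussianInt.toComplex n * θ)
    rwa [norm_sub_rev α (GaussianInt.toComplex n * θ)] at this
  set D : ℝ := dGauss (GaussianInt.toComplex n * θ) with hD
  have hfin : 1 / Q ≤ Real.sqrt 2 * (D + 1 / (2 * Real.sqrt 2 * Q)) := by
    calc 1 / Q ≤ Real.sqrt 2 * dGauss α := hdα
      _ ≤ Real.sqrt 2 * (D + 1 / (2 * Real.sqrt 2 * Q)) := by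
          apply mul_le_mul_of_nonneg_left _ (le_of_lt s2pos)
          linarith [hlip, hpert2]
  rw [s8]
  rw [div_le_iff₀ (by positivity)]
  have hexp : Real.sqrt 2 * (1 / (2 * Real.sqrt 2 * Q)) = 1 / (2 * Q) := by
    field_simp
  have hfin' : 1 / Q ≤ Real.sqrt 2 * D + 1 / (2 * Q) := by
    have hma : Real.sqrt 2 * (D + 1 / (2 * Real.sqrt 2 * Q))
        = Real.sqrt 2 * D + Real.sqrt 2 * (1 / (2 * Real.sqrt 2 * Q)) := mul_add _ _ _
    rw [hma, hexp] at hfin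
    exact hfin
  have h3 : 1 / (2 * Q) ≤ Real.sqrt 2 * D := by
    have hhalf : 1 / Q - 1 / (2 * Q) = 1 / (2 * Q) := by field_simp; ring
    linarith [hfin', hhalf]
  rw [div_le_iff₀ (by positivity)] at h3
  have hr : Real.sqrt 2 * D * (2 * Q) = D * (2 * Real.sqrt 2 * Q) := by ring
  linarith [h3, hr.le, hr.ge]
end

section
/- Let θ be a complex number, a, q ∈ ℤ[i] with q ≠ 0 and gcd(a,q) = 1, and suppose θ = a/q + γ where |γ| ≤ C|q|^{-2} with C := 2 + √2. If 0 ≤ Δ₁, Δ₂ < 1/(√8·|q|) and 1 ≤ z ≤ |q|²/(8C²), then there is no n ∈ ℤ[i] with 0 < N(n) ≤ z, ‖Im(nθ)‖ ≤ Δ₁ and ‖Re(nθ)‖ ≤ Δ₂; that is, Σ_θ(z, Δ₁, Δ₂) = 0. -/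
lemma dInt_exists (t : ℝ) : ∃ k : ℤ, |t - k| ≤ dInt t := by
  unfold dInt
  have h0 := Int.fract_nonneg t
  have h1 := Int.fract_lt_one t
  have hf : Int.fract t = t - ⌊t⌋ := rfl
  rcases le_total (Int.fract t) (1 - Int.fract t) with h | h
  · refine ⟨⌊t⌋, ?_⟩
    rw [min_eq_left h, show t - (⌊t⌋:ℝ) = Int.fract t from hf.symm, abs_of_nonneg h0]
  · refine ⟨⌊t⌋ + 1, ?_⟩
    rw [min_eq_right h]
    push_cast
    have he : t - ((⌊t⌋:ℝ) + 1) = Int.fract t - 1 := by rw [hf]; ring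
    rw [he, abs_of_nonpos (by linarith)]
    linarith

lemma one_le_Nm_s13 {x : GaussianInt} (hx : x ≠ 0) : 1 ≤ Nm x := by
  unfold Nm
  rw [Complex.sq_norm, ← GaussianInt.intCast_real_norm]
  have h1 : 0 ≤ x.norm := Zsqrtd.norm_nonneg (by norm_num) x
  have h2 : x.norm ≠ 0 := fun h => hx ((Zsqrtd.norm_eq_zero_iff (by norm_num) x).mp h)
  have h3 : (1:ℤ) ≤ x.norm := by omega
  exact_mod_cast h3

set_option maxHeartbeats 1000000 in
theorem no_small_fractional_parts (θ : ℂ) (a q : GaussianInt) (hq : q ≠ 0)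
    (hcop : IsCoprime a q)
    (hγ : ‖θ - GaussianInt.toComplex a / GaussianInt.toComplex q‖ ≤
      (2 + Real.sqrt 2) / absG q ^ 2)
    (z Δ₁ Δ₂ : ℝ) (hΔ₁0 : 0 ≤ Δ₁) (hΔ₁ : Δ₁ < 1 / (Real.sqrt 8 * absG q))
    (hΔ₂0 : 0 ≤ Δ₂) (hΔ₂ : Δ₂ < 1 / (Real.sqrt 8 * absG q))
    (hz1 : 1 ≤ z) (hz2 : z ≤ absG q ^ 2 / (8 * (2 + Real.sqrt 2) ^ 2)) :
    {n : GaussianInt | 0 < Nm n ∧ Nm n ≤ z ∧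
      dInt ((GaussianInt.toComplex n * θ).im) ≤ Δ₁ ∧
      dInt ((GaussianInt.toComplex n * θ).re) ≤ Δ₂} = ∅ := by
  ext n
  simp only [Set.mem_setOf_eq, Set.mem_empty_iff_false, iff_false]
  rintro ⟨h0, hzn, h1, h2⟩
  -- basic notation and positivity facts
  set C : ℝ := 2 + Real.sqrt 2 with hCdef
  set Q : ℝ := absG q with hQdef
  have hs2 : Real.sqrt 2 ^ 2 = 2 := Real.sq_sqrt (by norm_num)
  have hs2pos : 0 < Real.sqrt 2 := Real.sqrt_pos.mpr (by norm_num)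
  have hs2lt : Real.sqrt 2 < 3/2 := by nlinarith
  have hs8 : Real.sqrt 8 = 2 * Real.sqrt 2 := by
    rw [show (8:ℝ) = 2^2 * 2 by norm_num, Real.sqrt_mul (by positivity), Real.sqrt_sq (by norm_num)]
  have hqc : GaussianInt.toComplex q ≠ 0 := by
    simpa [GaussianInt.toComplex_eq_zero] using hq
  have hQ : 0 < Q := by
    rw [hQdef]; unfold absG; exact norm_pos_iff.mpr hqc
  have hC : 2 ≤ C := by rw [hCdef]; nlinarith
  have hCpos : 0 < C := by linarith
  have hnc : GaussianInt.toComplex n ≠ 0 := by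
    intro h
    rw [Nm, h] at h0
    simp at h0
  have hn0 : n ≠ 0 := fun h => hnc (by rw [h]; simp)
  -- nearest Gaussian integer m
  obtain ⟨k₂, hk₂⟩ := dInt_exists ((GaussianInt.toComplex n * θ).im)
  obtain ⟨k₁, hk₁⟩ := dInt_exists ((GaussianInt.toComplex n * θ).re)
  have hk₂' : |(GaussianInt.toComplex n * θ).im - k₂| ≤ Δ₁ := le_trans hk₂ h1
  have hk₁' : |(GaussianInt.toComplex n * θ).re - k₁| ≤ Δ₂ := le_trans hk₁ h2
  set m : GaussianInt := ⟨k₁, k₂⟩ with hmdef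
  have hmre : (GaussianInt.toComplex m).re = k₁ := by rw [hmdef, GaussianInt.toComplex_def']; simp
  have hmim : (GaussianInt.toComplex m).im = k₂ := by rw [hmdef, GaussianInt.toComplex_def']; simp
  set E : ℝ := ‖GaussianInt.toComplex n * θ - GaussianInt.toComplex m‖ with hEdef
  have hEnn : 0 ≤ E := norm_nonneg _
  have hE2 : E ^ 2 ≤ Δ₂ ^ 2 + Δ₁ ^ 2 := by
    rw [hEdef, Complex.sq_norm, Complex.normSq_apply, Complex.sub_re, Complex.sub_im, hmre, hmim]
    have e1 := sq_abs ((GaussianInt.toComplex n * θ).re - k₁)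
    have e2 := sq_abs ((GaussianInt.toComplex n * θ).im - k₂)
    nlinarith [abs_nonneg ((GaussianInt.toComplex n * θ).re - k₁),
      abs_nonneg ((GaussianInt.toComplex n * θ).im - k₂)]
  have hΔ₁' : Δ₁ < 1 / (2 * Real.sqrt 2 * Q) := by rwa [hs8] at hΔ₁
  have hΔ₂' : Δ₂ < 1 / (2 * Real.sqrt 2 * Q) := by rwa [hs8] at hΔ₂
  have hb2 : (1 / (2 * Real.sqrt 2 * Q)) ^ 2 = 1 / (8 * Q ^ 2) := by
    rw [div_pow, mul_pow, mul_pow, hs2]; norm_num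
  have hE : E < 1 / (2 * Q) := by
    apply lt_of_pow_lt_pow_left₀ 2 (by positivity)
    have hΔ1sq : Δ₁ ^ 2 < 1 / (8 * Q ^ 2) := by
      rw [← hb2]; exact pow_lt_pow_left₀ hΔ₁' hΔ₁0 two_ne_zero
    have hΔ2sq : Δ₂ ^ 2 < 1 / (8 * Q ^ 2) := by
      rw [← hb2]; exact pow_lt_pow_left₀ hΔ₂' hΔ₂0 two_ne_zero
    have h4 : (1 / (2 * Q)) ^ 2 = 1 / (4 * Q ^ 2) := by rw [div_pow, mul_pow]; norm_num
    have h48 : (1:ℝ) / (4 * Q ^ 2) = 2 * (1 / (8 * Q ^ 2)) := by ring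
    rw [h4, h48]
    linarith
  -- bound on |n|
  set A : ℝ := ‖GaussianInt.toComplex n‖ with hAdef
  have hAnn : 0 ≤ A := norm_nonneg _
  have hA : A ≤ Q / (2 * Real.sqrt 2 * C) := by
    apply le_of_pow_le_pow_left₀ two_ne_zero (by positivity)
    have hA2 : Nm n ≤ Q ^ 2 / (8 * C ^ 2) := le_trans hzn hz2
    have hrw : (Q / (2 * Real.sqrt 2 * C)) ^ 2 = Q ^ 2 / (8 * C ^ 2) := by
      rw [div_pow, mul_pow, mul_pow, hs2]; norm_num
    rw [hrw]
    exact hA2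
  -- the key Gaussian integer x = n*a - m*q
  set γ : ℂ := θ - GaussianInt.toComplex a / GaussianInt.toComplex q with hγdef
  have key : (GaussianInt.toComplex (n * a - m * q)) =
      GaussianInt.toComplex q * ((GaussianInt.toComplex n * θ - GaussianInt.toComplex m)
        - GaussianInt.toComplex n * γ) := by
    rw [GaussianInt.toComplex_sub, GaussianInt.toComplex_mul, GaussianInt.toComplex_mul, hγdef]
    field_simp
    ring
  have habs : ‖GaussianInt.toComplex (n * a - m * q)‖ < 1 := by
    rw [key]
    rw [norm_mul]
    have hQa : ‖GaussianInt.toComplex q‖ = Q := rfl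
    rw [hQa]
    have hb : ‖(GaussianInt.toComplex n * θ - GaussianInt.toComplex m)
        - GaussianInt.toComplex n * γ‖ ≤ E + A * (C / Q ^ 2) := by
      refine le_trans (norm_sub_le _ _) ?_
      rw [norm_mul]
      gcongr
    have hsC : Real.sqrt 2 ≠ 0 := ne_of_gt hs2pos
    have hQne : Q ≠ 0 := ne_of_gt hQ
    have hCne : C ≠ 0 := ne_of_gt hCpos
    calc Q * ‖(GaussianInt.toComplex n * θ - GaussianInt.toComplex m)
          - GaussianInt.toComplex n * γ‖ ≤ Q * (E + A * (C / Q ^ 2)) := by gcongr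
      _ < Q * (1 / (2 * Q) + Q / (2 * Real.sqrt 2 * C) * (C / Q ^ 2)) := by
          refine mul_lt_mul_of_pos_left (add_lt_add_of_lt_of_le hE ?_) hQ
          gcongr
      _ = 1 / 2 + 1 / (2 * Real.sqrt 2) := by field_simp
      _ < 1 := by
          have h12 : 1 / (2 * Real.sqrt 2) < 1 / 2 := by
            rw [div_lt_div_iff₀ (by positivity) (by norm_num)]
            nlinarith
          linarith
  have hx0 : n * a - m * q = 0 := by
    by_contra hne
    have := one_le_Nm_s13 hne
    rw [Nm] at this
    nlinarith [norm_nonneg (GaussianInt.toComplex (n * a - m * q))]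
  have hdvd : q ∣ n := by
    have hna : q ∣ n * a := ⟨m, by rw [sub_eq_zero] at hx0; rw [hx0]; ring⟩
    exact hcop.symm.dvd_of_dvd_mul_right hna
  obtain ⟨c, hc⟩ := hdvd
  have hc0 : c ≠ 0 := by rintro rfl; simp at hc; exact hn0 hc
  have hNmmul : Nm n = Nm q * Nm c := by
    rw [hc, Nm, Nm, Nm, GaussianInt.toComplex_mul, norm_mul, mul_pow]
  have hNq : Nm q = Q ^ 2 := rfl
  have h1c := one_le_Nm_s13 hc0
  have h1q := one_le_Nm_s13 hq
  rw [hNq] at h1q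
  have hQn : Q ^ 2 ≤ Nm n := by rw [hNmmul, hNq]; nlinarith
  have hlt : Q ^ 2 / (8 * C ^ 2) < Q ^ 2 := by
    rw [div_lt_iff₀ (by positivity)]
    have h32 : (32:ℝ) ≤ 8 * C ^ 2 := by nlinarith
    nlinarith [mul_le_mul_of_nonneg_left h32 (sq_nonneg Q)]
  linarith
end

section
/- There is an absolute constant c > 0 with the following property. Let θ be a complex number, a, q ∈ ℤ[i] with q ≠ 0 and gcd(a,q) = 1, and suppose θ = a/q + γ where |γ| ≤ C|q|^{-2} with C := 2 + √2. Then for all y, z ≥ 1, one has G_θ(y,z) := ∑_{n ∈ ℤ[i], 0 < N(n) ≤ z} min{‖Im(nθ)‖^{-1}, √y}^{1/2} · min{‖Re(nθ)‖^{-1}, √y}^{1/2} ≤ c·(1 + z/|q|²)·(y^{1/2} + |q|²)·(log 2y)², where min{‖t‖^{-1}, √y} is interpreted as √y when ‖t‖ = 0. -/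
/-- `min{‖t‖⁻¹, √y}`, interpreted as `√y` when `‖t‖ = 0`. -/
noncomputable def minInv (t y : ℝ) : ℝ :=
  if dInt t = 0 then Real.sqrt y else min (dInt t)⁻¹ (Real.sqrt y)

/-- The sum `G_θ(y,z)`. -/
noncomputable def Gsum (θ : ℂ) (y z : ℝ) : ℝ :=
  ∑ᶠ n ∈ {n : GaussianInt | 0 < Nm n ∧ Nm n ≤ z},
    Real.sqrt (minInv ((GaussianInt.toComplex n * θ).im) y) *
      Real.sqrt (minInv ((GaussianInt.toComplex n * θ).re) y)

/-! ### Auxiliary lemmas -/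

noncomputable def gcell (M : ℕ) (y : ℝ) (i : ℕ) : ℝ :=
  Real.sqrt (if min i (M-1-i) = 0 then Real.sqrt y
             else min ((M:ℝ)/(min i (M-1-i))) (Real.sqrt y))

lemma gcell_nonneg (M : ℕ) (y : ℝ) (i : ℕ) : 0 ≤ gcell M y i := Real.sqrt_nonneg _

lemma gcell_sq (M : ℕ) (y : ℝ) (i : ℕ) :
    gcell M y i ^ 2 = (if min i (M-1-i) = 0 then Real.sqrt y
             else min ((M:ℝ)/(min i (M-1-i))) (Real.sqrt y)) := by
  apply Real.sq_sqrt
  split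
  · exact Real.sqrt_nonneg y
  · exact le_min (by positivity) (Real.sqrt_nonneg y)

lemma cell_lt (M : ℕ) (hM : 0 < M) (t : ℝ) : ⌊Int.fract t * M⌋₊ < M := by
  rw [Nat.floor_lt (mul_nonneg (Int.fract_nonneg t) (Nat.cast_nonneg M))]
  have := Int.fract_lt_one t
  have hM' : (0:ℝ) < M := by exact_mod_cast hM
  nlinarith

lemma fract_eq_zero_of_dInt_eq_zero {t : ℝ} (h : dInt t = 0) : Int.fract t = 0 := by
  have h1 := Int.fract_nonneg t
  have h2 := Int.fract_lt_one t
  unfold dInt at h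
  rcases min_eq_iff.mp h with ⟨h', _⟩ | ⟨h', _⟩
  · exact h'
  · linarith

lemma minInv_le_gcell_sq (M : ℕ) (hM : 0 < M) (y t : ℝ) :
    minInv t y ≤ gcell M y ⌊Int.fract t * M⌋₊ ^ 2 := by
  rw [gcell_sq M y]
  set i := ⌊Int.fract t * M⌋₊ with hi
  set e := min i (M-1-i) with hedef
  have hiM : i < M := cell_lt M hM t
  have hM' : (0:ℝ) < M := by exact_mod_cast hM
  have hfl : (i:ℝ) ≤ Int.fract t * M := Nat.floor_le (mul_nonneg (Int.fract_nonneg t) (Nat.cast_nonneg M))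
  have hfu : Int.fract t * M < (i:ℝ) + 1 := Nat.lt_floor_add_one _
  unfold minInv
  by_cases h0 : dInt t = 0
  · have hf0 : Int.fract t = 0 := fract_eq_zero_of_dInt_eq_zero h0
    have : i = 0 := by rw [hi, hf0]; simp
    rw [if_pos h0, hedef, this]
    simp
  · rw [if_neg h0]
    by_cases he : e = 0
    · rw [if_pos he]; exact min_le_right _ _
    · rw [if_neg he]
      have he1 : 1 ≤ e := Nat.one_le_iff_ne_zero.2 he
      have hei : (e:ℝ) ≤ (i:ℝ) := by exact_mod_cast min_le_left i (M-1-i)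
      have heim : (e:ℝ) ≤ ((M-1-i : ℕ):ℝ) := by exact_mod_cast min_le_right i (M-1-i)
      have hcast : ((M-1-i : ℕ) : ℝ) = (M:ℝ) - 1 - i := by
        have h1 : 1 ≤ M := hM
        push_cast [Nat.cast_sub (by omega : i ≤ M - 1), Nat.cast_sub h1]
        ring
      have he0 : (0:ℝ) < (e:ℝ) := by exact_mod_cast he1
      have hd1 : (e:ℝ)/M ≤ Int.fract t := by
        rw [div_le_iff₀ hM']
        linarith
      have hd2 : (e:ℝ)/M ≤ 1 - Int.fract t := by
        rw [div_le_iff₀ hM']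
        have h4 : (e:ℝ) ≤ (M:ℝ) - 1 - i := by rw [← hcast]; exact heim
        nlinarith
      have hdInt : (e:ℝ)/M ≤ dInt t := le_min hd1 hd2
      have hdpos : 0 < dInt t := lt_of_lt_of_le (by positivity) hdInt
      apply min_le_min _ (le_refl _)
      have h5 : (dInt t)⁻¹ ≤ ((e:ℝ)/M)⁻¹ := inv_anti₀ (by positivity) hdInt
      calc (dInt t)⁻¹ ≤ ((e:ℝ)/M)⁻¹ := h5
        _ = (M:ℝ)/(e:ℝ) := by rw [inv_div]

lemma aux_sum_inv_sqrt (m : ℕ) :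
    ∑ i ∈ Finset.range (m+1), (if 1 ≤ i then (Real.sqrt i)⁻¹ else 0) ≤ 2 * Real.sqrt m := by
  induction m with
  | zero => simp
  | succ k ih =>
    rw [Finset.sum_range_succ]
    have hs : Real.sqrt ((k:ℝ)+1) ^ 2 = (k:ℝ)+1 := Real.sq_sqrt (by positivity)
    have ht : Real.sqrt (k:ℝ) ^ 2 = (k:ℝ) := Real.sq_sqrt (by positivity)
    have hs0 : 0 < Real.sqrt ((k:ℝ)+1) := Real.sqrt_pos.2 (by positivity)
    have ht0 : 0 ≤ Real.sqrt (k:ℝ) := Real.sqrt_nonneg _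
    have key : (Real.sqrt ((k:ℝ)+1))⁻¹ ≤ 2 * Real.sqrt ((k:ℝ)+1) - 2 * Real.sqrt k := by
      rw [inv_le_iff_one_le_mul₀ hs0]
      nlinarith [sq_nonneg (Real.sqrt ((k:ℝ)+1) - Real.sqrt k)]
    have hcast : ((k+1 : ℕ) : ℝ) = (k:ℝ)+1 := by push_cast; ring
    simp only [hcast]
    calc ∑ i ∈ Finset.range (k+1), (if 1 ≤ i then (Real.sqrt i)⁻¹ else 0)
          + (if 1 ≤ k+1 then (Real.sqrt ((k:ℝ)+1))⁻¹ else 0)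
        ≤ 2 * Real.sqrt k + (Real.sqrt ((k:ℝ)+1))⁻¹ := by
          rw [if_pos (by omega)]; exact add_le_add_left ih _
      _ ≤ 2 * Real.sqrt ((k:ℝ)+1) := by linarith

lemma sum_inv_sqrt (m : ℕ) :
    ∑ i ∈ Finset.range m, (if 1 ≤ i then (Real.sqrt i)⁻¹ else 0) ≤ 2 * Real.sqrt m := by
  cases m with
  | zero => simp
  | succ k =>
    calc ∑ i ∈ Finset.range (k+1), (if 1 ≤ i then (Real.sqrt i)⁻¹ else 0)
        ≤ 2 * Real.sqrt k := aux_sum_inv_sqrt k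
      _ ≤ 2 * Real.sqrt ((k:ℕ)+1:ℕ) := by
          have : Real.sqrt (k:ℝ) ≤ Real.sqrt (((k:ℕ)+1:ℕ):ℝ) := Real.sqrt_le_sqrt (by push_cast; linarith)
          linarith

lemma sum_gcell (M : ℕ) (hM : 1 ≤ M) (y : ℝ) :
    ∑ i ∈ Finset.range M, gcell M y i
      ≤ 2 * Real.sqrt (Real.sqrt y) + 4 * M := by
  set y4 := Real.sqrt (Real.sqrt y) with hy4
  have hy40 : 0 ≤ y4 := Real.sqrt_nonneg _
  set u : ℕ → ℝ := fun j => if 1 ≤ j then (Real.sqrt j)⁻¹ else 0 with hu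
  have hu0 : ∀ j, 0 ≤ u j := by
    intro j; rw [hu]; dsimp only; split
    · positivity
    · exact le_refl 0
  have hpt : ∀ i ∈ Finset.range M, gcell M y i ≤
      (if i = 0 then y4 else 0) + (if i = M-1 then y4 else 0)
        + Real.sqrt M * (u i + u (M-1-i)) := by
    intro i hiR
    have hiM : i < M := Finset.mem_range.1 hiR
    have hsM : (0:ℝ) ≤ Real.sqrt M := Real.sqrt_nonneg _
    have huu : 0 ≤ u i + u (M-1-i) := add_nonneg (hu0 _) (hu0 _)
    by_cases he : min i (M-1-i) = 0
    · have hcase : i = 0 ∨ i = M-1 := by omega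
      have hg : gcell M y i = y4 := by rw [gcell, if_pos he, hy4]
      rcases hcase with h | h
      · rw [if_pos h]
        have h2 : (0:ℝ) ≤ (if i = M-1 then y4 else 0) := by split <;> simp [hy40]
        nlinarith [mul_nonneg hsM huu]
      · rw [if_pos h]
        have h2 : (0:ℝ) ≤ (if i = 0 then y4 else 0) := by split <;> simp [hy40]
        nlinarith [mul_nonneg hsM huu]
    · have he1 : 1 ≤ min i (M-1-i) := Nat.one_le_iff_ne_zero.2 he
      have hi1 : 1 ≤ i := le_trans he1 (min_le_left _ _)
      have him1 : 1 ≤ M-1-i := le_trans he1 (min_le_right _ _)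
      set e := min i (M-1-i) with hedef
      have he0 : (0:ℝ) < (e:ℝ) := by exact_mod_cast he1
      have hg1 : gcell M y i ≤ Real.sqrt ((M:ℝ)/(e:ℝ)) := by
        rw [gcell, if_neg he]
        exact Real.sqrt_le_sqrt (min_le_left _ _)
      have hg2 : Real.sqrt ((M:ℝ)/(e:ℝ)) = Real.sqrt M * (Real.sqrt (e:ℝ))⁻¹ := by
        rw [Real.sqrt_div (Nat.cast_nonneg M), div_eq_mul_inv]
      have he_or : (e:ℕ) = i ∨ (e:ℕ) = M-1-i := by omega
      have hinv : (Real.sqrt (e:ℝ))⁻¹ ≤ u i + u (M-1-i) := by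
        rcases he_or with h | h
        · have : u i = (Real.sqrt (i:ℝ))⁻¹ := by rw [hu]; simp [hi1]
          rw [this, ← h]
          exact le_add_of_nonneg_right (hu0 _)
        · have : u (M-1-i) = (Real.sqrt ((M-1-i:ℕ):ℝ))⁻¹ := by rw [hu]; simp [him1]
          rw [this, ← h]
          exact le_add_of_nonneg_left (hu0 _)
      have h2 : (0:ℝ) ≤ (if i = 0 then y4 else 0) := by split <;> simp [hy40]
      have h3 : (0:ℝ) ≤ (if i = M-1 then y4 else 0) := by split <;> simp [hy40]
      calc gcell M y i ≤ Real.sqrt ((M:ℝ)/(e:ℝ)) := hg1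
        _ = Real.sqrt M * (Real.sqrt (e:ℝ))⁻¹ := hg2
        _ ≤ Real.sqrt M * (u i + u (M-1-i)) := by
            exact mul_le_mul_of_nonneg_left hinv hsM
        _ ≤ _ := by linarith
  have hsum := Finset.sum_le_sum hpt
  have h1 : ∑ i ∈ Finset.range M, (if i = 0 then y4 else 0) = y4 := by
    rw [Finset.sum_ite_eq' (Finset.range M) 0 (fun _ => y4)]
    have h0mem : 0 ∈ Finset.range M := Finset.mem_range.2 hM
    simp [h0mem]
  have h2 : ∑ i ∈ Finset.range M, (if i = M-1 then y4 else 0) = y4 := by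
    rw [Finset.sum_ite_eq' (Finset.range M) (M-1) (fun _ => y4)]
    have : M - 1 ∈ Finset.range M := Finset.mem_range.2 (by omega)
    simp [this]
  have h3 : ∑ i ∈ Finset.range M, u (M-1-i) = ∑ i ∈ Finset.range M, u i :=
    Finset.sum_range_reflect u M
  have h4 : ∑ i ∈ Finset.range M, u i ≤ 2 * Real.sqrt M := sum_inv_sqrt M
  have hsM : (0:ℝ) ≤ Real.sqrt M := Real.sqrt_nonneg _
  have hsMsq : Real.sqrt (M:ℝ) * Real.sqrt (M:ℝ) = (M:ℝ) := Real.mul_self_sqrt (Nat.cast_nonneg M)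
  calc ∑ i ∈ Finset.range M, gcell M y i
      ≤ ∑ i ∈ Finset.range M, ((if i = 0 then y4 else 0) + (if i = M-1 then y4 else 0)
          + Real.sqrt M * (u i + u (M-1-i))) := hsum
    _ = y4 + y4 + Real.sqrt M * (∑ i ∈ Finset.range M, u i + ∑ i ∈ Finset.range M, u (M-1-i)) := by
        rw [Finset.sum_add_distrib, Finset.sum_add_distrib, h1, h2, ← Finset.mul_sum, Finset.sum_add_distrib]
    _ ≤ y4 + y4 + Real.sqrt M * (2*Real.sqrt M + 2*Real.sqrt M) := by
        have : ∑ i ∈ Finset.range M, u i + ∑ i ∈ Finset.range M, u (M-1-i) ≤ 2*Real.sqrt M + 2*Real.sqrt M := by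
          rw [h3]; linarith
        nlinarith
    _ ≤ 2 * y4 + 4 * M := by nlinarith

lemma ediv_abs_sub {x y L : ℤ} (hL : 0 < L) (h : x / L = y / L) : |x - y| ≤ L - 1 := by
  have hx := Int.mul_ediv_add_emod x L
  have hy : L * (x / L) + y % L = y := by rw [h]; exact Int.mul_ediv_add_emod y L
  have hxr := Int.emod_nonneg x (ne_of_gt hL)
  have hyr := Int.emod_nonneg y (ne_of_gt hL)
  have hxl := Int.emod_lt_of_pos x hL
  have hyl := Int.emod_lt_of_pos y hL
  rw [abs_le]
  constructor <;> linarith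

lemma sqrt2_le : Real.sqrt 2 ≤ 1.5 := by
  nlinarith [Real.sq_sqrt (by norm_num : (0:ℝ) ≤ 2), Real.sqrt_nonneg 2]

lemma abs_toComplex_ge_one (w : GaussianInt) (hw : w ≠ 0) : 1 ≤ ‖GaussianInt.toComplex w‖ := by
  have h1 : (1:ℝ) ≤ Complex.normSq (GaussianInt.toComplex w) := by
    rw [← GaussianInt.intCast_real_norm]
    have : 1 ≤ w.norm := by
      have := (GaussianInt.norm_pos).2 hw
      omega
    exact_mod_cast this
  have h2 : ‖GaussianInt.toComplex w‖ ^ 2 = Complex.normSq (GaussianInt.toComplex w) := Complex.sq_norm _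
  nlinarith [norm_nonneg (GaussianInt.toComplex w)]

lemma cabs_le (w : ℂ) {B : ℝ} (hB : 0 ≤ B)
    (h1 : |w.re| ≤ B) (h2 : |w.im| ≤ B) :
    ‖w‖ ≤ Real.sqrt 2 * B := by
  rw [Complex.norm_def, Complex.normSq_apply]
  have hr2 : w.re * w.re ≤ B^2 := by
    nlinarith [abs_nonneg w.re, sq_abs w.re, neg_abs_le w.re, le_abs_self w.re]
  have hi2 : w.im * w.im ≤ B^2 := by
    nlinarith [abs_nonneg w.im, sq_abs w.im, neg_abs_le w.im, le_abs_self w.im]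
  have hsum : w.re * w.re + w.im * w.im ≤ 2 * B^2 := by linarith
  calc Real.sqrt (w.re * w.re + w.im * w.im) ≤ Real.sqrt (2 * B^2) := Real.sqrt_le_sqrt hsum
    _ = Real.sqrt 2 * B := by
        rw [Real.sqrt_mul (by norm_num : (0:ℝ) ≤ 2), Real.sqrt_sq hB]

lemma toComplex_re' (w : GaussianInt) : (GaussianInt.toComplex w).re = (w.re : ℝ) := by
  cases w; simp [GaussianInt.toComplex_def]

lemma toComplex_im' (w : GaussianInt) : (GaussianInt.toComplex w).im = (w.im : ℝ) := by
  cases w; simp [GaussianInt.toComplex_def]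

lemma abs_toComplex_le {w : GaussianInt} {B : ℝ} (hB : 0 ≤ B)
    (h1 : |(w.re : ℝ)| ≤ B) (h2 : |(w.im : ℝ)| ≤ B) :
    ‖GaussianInt.toComplex w‖ ≤ Real.sqrt 2 * B :=
  cabs_le _ hB (by rwa [toComplex_re' w]) (by rwa [toComplex_im' w])
set_option maxHeartbeats 1000000 in
lemma key_inj (θ : ℂ) (a q : GaussianInt) (hq : q ≠ 0) (hco : IsCoprime a q)
    (hγ : ‖θ - GaussianInt.toComplex a / GaussianInt.toComplex q‖ ≤
      (2 + Real.sqrt 2) / ‖GaussianInt.toComplex q‖ ^ 2)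
    (L M : ℕ) (hL1 : 1 ≤ L)
    (hLA : (L:ℝ) - 1 ≤ ‖GaussianInt.toComplex q‖ / 10)
    (hM4 : 4 * ‖GaussianInt.toComplex q‖ ≤ (M:ℝ))
    (n n' : GaussianInt)
    (hbre : n.re / (L:ℤ) = n'.re / (L:ℤ))
    (hbim : n.im / (L:ℤ) = n'.im / (L:ℤ))
    (hcre : ⌊Int.fract ((GaussianInt.toComplex n * θ).re) * M⌋₊ =
            ⌊Int.fract ((GaussianInt.toComplex n' * θ).re) * M⌋₊)
    (hcim : ⌊Int.fract ((GaussianInt.toComplex n * θ).im) * M⌋₊ =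
            ⌊Int.fract ((GaussianInt.toComplex n' * θ).im) * M⌋₊) :
    n = n' := by
  set A := ‖GaussianInt.toComplex q‖ with hA
  have hA1 : 1 ≤ A := abs_toComplex_ge_one q hq
  have hA0 : 0 < A := by linarith
  have hs2 := sqrt2_le
  have hs2sq : Real.sqrt 2 ^ 2 = 2 := Real.sq_sqrt (by norm_num)
  have hs2nn : 0 ≤ Real.sqrt 2 := Real.sqrt_nonneg 2
  have hM0 : (0:ℝ) < M := by nlinarith
  by_contra hne
  set Δ := n - n' with hΔ
  have hΔ0 : Δ ≠ 0 := sub_ne_zero.2 hne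
  have hL0 : (0:ℤ) < (L:ℤ) := by exact_mod_cast hL1
  -- component bounds
  have hreZ : |n.re - n'.re| ≤ (L:ℤ) - 1 := ediv_abs_sub hL0 hbre
  have himZ : |n.im - n'.im| ≤ (L:ℤ) - 1 := ediv_abs_sub hL0 hbim
  have hΔre : |(Δ.re : ℝ)| ≤ (L:ℝ) - 1 := by
    have : Δ.re = n.re - n'.re := Zsqrtd.re_sub n n'
    rw [this]
    exact_mod_cast (by exact_mod_cast hreZ : |((n.re - n'.re : ℤ) : ℝ)| ≤ ((L:ℤ) - 1 : ℤ))
  have hΔim : |(Δ.im : ℝ)| ≤ (L:ℝ) - 1 := by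
    have : Δ.im = n.im - n'.im := Zsqrtd.im_sub n n'
    rw [this]
    exact_mod_cast (by exact_mod_cast himZ : |((n.im - n'.im : ℤ) : ℝ)| ≤ ((L:ℤ) - 1 : ℤ))
  have hL1R : (0:ℝ) ≤ (L:ℝ) - 1 := by
    have : (1:ℝ) ≤ (L:ℝ) := by exact_mod_cast hL1
    linarith
  have hΔabs : ‖GaussianInt.toComplex Δ‖ ≤ Real.sqrt 2 * ((L:ℝ) - 1) :=
    abs_toComplex_le hL1R hΔre hΔim
  have hΔsmall : ‖GaussianInt.toComplex Δ‖ < A := by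
    calc ‖GaussianInt.toComplex Δ‖ ≤ Real.sqrt 2 * ((L:ℝ)-1) := hΔabs
      _ ≤ 1.5 * (A/10) := by nlinarith
      _ < A := by nlinarith
  -- q does not divide Δ
  have hqnd : ¬ q ∣ Δ := by
    rintro ⟨c, hc⟩
    have hc0 : c ≠ 0 := by
      rintro rfl; rw [mul_zero] at hc; exact hΔ0 hc
    have : A * 1 ≤ ‖GaussianInt.toComplex Δ‖ := by
      rw [hc, map_mul, norm_mul]
      exact mul_le_mul_of_nonneg_left (abs_toComplex_ge_one c hc0) (norm_nonneg _)
    linarith [hΔsmall]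
  -- the Gaussian integer k
  set x := (GaussianInt.toComplex n * θ).re with hx
  set x' := (GaussianInt.toComplex n' * θ).re with hx'
  set w1 := (GaussianInt.toComplex n * θ).im with hw1
  set w1' := (GaussianInt.toComplex n' * θ).im with hw1'
  set k : GaussianInt := ⟨⌊x⌋ - ⌊x'⌋, ⌊w1⌋ - ⌊w1'⌋⟩ with hk
  -- fract closeness
  have fract_close : ∀ t t' : ℝ, (⌊Int.fract t * M⌋₊ = ⌊Int.fract t' * M⌋₊) →
      |Int.fract t - Int.fract t'| < 1/M := by
    intro t t' hcell
    have h1 : ((⌊Int.fract t * M⌋₊ : ℝ)) ≤ Int.fract t * M :=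
      Nat.floor_le (mul_nonneg (Int.fract_nonneg t) (by positivity))
    have h2 : Int.fract t * M < (⌊Int.fract t * M⌋₊ : ℝ) + 1 := Nat.lt_floor_add_one _
    have h3 : ((⌊Int.fract t' * M⌋₊ : ℝ)) ≤ Int.fract t' * M :=
      Nat.floor_le (mul_nonneg (Int.fract_nonneg t') (by positivity))
    have h4 : Int.fract t' * M < (⌊Int.fract t' * M⌋₊ : ℝ) + 1 := Nat.lt_floor_add_one _
    rw [hcell] at h1 h2
    have h5 : (Int.fract t - Int.fract t') * M < 1 := by
      have expand : (Int.fract t - Int.fract t') * M = Int.fract t * M - Int.fract t' * M := by ring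
      rw [expand]; linarith
    have h6 : (Int.fract t' - Int.fract t) * M < 1 := by
      have expand : (Int.fract t' - Int.fract t) * M = Int.fract t' * M - Int.fract t * M := by ring
      rw [expand]; linarith
    rw [abs_lt]
    constructor
    · rw [neg_lt]
      rw [show -(Int.fract t - Int.fract t') = Int.fract t' - Int.fract t by ring]
      rw [lt_div_iff₀ hM0] at *
      exact h6
    · rw [lt_div_iff₀ hM0] at *
      exact h5
  have fract_rewrite : ∀ t t' : ℝ, t - t' - ((⌊t⌋ - ⌊t'⌋ : ℤ) : ℝ) = Int.fract t - Int.fract t' := by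
    intro t t'
    unfold Int.fract
    push_cast
    ring
  have hclre : |x - x' - ((⌊x⌋ - ⌊x'⌋ : ℤ) : ℝ)| < 1/M := by
    rw [fract_rewrite x x']
    exact fract_close x x' hcre
  have hclim : |w1 - w1' - ((⌊w1⌋ - ⌊w1'⌋ : ℤ) : ℝ)| < 1/M := by
    rw [fract_rewrite w1 w1']
    exact fract_close w1 w1' hcim
  -- the nonzero Gaussian integer Δ*a - k*q
  have hqc0 : GaussianInt.toComplex q ≠ 0 := by
    rw [Ne, GaussianInt.toComplex_eq_zero]; exact hq
  have hu0 : Δ * a - k * q ≠ 0 := by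
    intro h
    have h' : Δ * a = k * q := sub_eq_zero.1 h
    have hdvd : q ∣ Δ * a := ⟨k, by rw [h', mul_comm]⟩
    exact hqnd (hco.symm.dvd_of_dvd_mul_right hdvd)
  have huabs : 1 ≤ ‖GaussianInt.toComplex (Δ*a - k*q)‖ := abs_toComplex_ge_one _ hu0
  -- lower bound for the rational point
  have hlow : 1/A ≤ ‖GaussianInt.toComplex Δ *
      (GaussianInt.toComplex a / GaussianInt.toComplex q) - GaussianInt.toComplex k‖ := by
    have heq : GaussianInt.toComplex Δ * (GaussianInt.toComplex a / GaussianInt.toComplex q)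
        - GaussianInt.toComplex k
        = GaussianInt.toComplex (Δ*a - k*q) / GaussianInt.toComplex q := by
      simp only [map_sub, map_mul]
      field_simp
    rw [heq, norm_div, ← hA]
    gcongr
  -- upper bound via cells
  set w := GaussianInt.toComplex Δ * θ - GaussianInt.toComplex k with hwdef
  have hwsplit : GaussianInt.toComplex Δ * θ = GaussianInt.toComplex n * θ - GaussianInt.toComplex n' * θ := by
    rw [hΔ, map_sub, sub_mul]
  have hkre : (GaussianInt.toComplex k).re = ((⌊x⌋ - ⌊x'⌋ : ℤ) : ℝ) := by
    rw [toComplex_re' k]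
  have hkim : (GaussianInt.toComplex k).im = ((⌊w1⌋ - ⌊w1'⌋ : ℤ) : ℝ) := by
    rw [toComplex_im' k]
  have hwre : |w.re| ≤ 1/M := by
    rw [hwdef, Complex.sub_re, hwsplit, Complex.sub_re, hkre]
    exact le_of_lt hclre
  have hwim : |w.im| ≤ 1/M := by
    rw [hwdef, Complex.sub_im, hwsplit, Complex.sub_im, hkim]
    exact le_of_lt hclim
  have hw_abs : ‖w‖ ≤ Real.sqrt 2 * (1/M) := cabs_le w (by positivity) hwre hwim
  -- triangle inequality
  set γ := θ - GaussianInt.toComplex a / GaussianInt.toComplex q with hγdef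
  have htri : ‖GaussianInt.toComplex Δ *
      (GaussianInt.toComplex a / GaussianInt.toComplex q) - GaussianInt.toComplex k‖
      ≤ ‖w‖ + ‖GaussianInt.toComplex Δ * γ‖ := by
    have hrel : GaussianInt.toComplex Δ * (GaussianInt.toComplex a / GaussianInt.toComplex q)
        - GaussianInt.toComplex k = w - GaussianInt.toComplex Δ * γ := by
      rw [hwdef, hγdef]; ring
    rw [hrel]
    exact norm_sub_le _ _
  have hγup : ‖GaussianInt.toComplex Δ * γ‖
      ≤ (Real.sqrt 2 * ((L:ℝ)-1)) * ((2+Real.sqrt 2)/A^2) := by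
    rw [norm_mul]
    apply mul_le_mul hΔabs hγ (norm_nonneg _) (by positivity)
  have hMle : 1/(M:ℝ) ≤ 1/(4*A) := by
    apply one_div_le_one_div_of_le (by positivity) hM4
  have hchain : 1/A ≤ Real.sqrt 2 * (1/(4*A)) + (Real.sqrt 2 * (A/10)) * ((2+Real.sqrt 2)/A^2) := by
    have e1 : Real.sqrt 2 * (1/(M:ℝ)) ≤ Real.sqrt 2 * (1/(4*A)) :=
      mul_le_mul_of_nonneg_left hMle hs2nn
    have e2 : (Real.sqrt 2 * ((L:ℝ)-1)) * ((2+Real.sqrt 2)/A^2)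
        ≤ (Real.sqrt 2 * (A/10)) * ((2+Real.sqrt 2)/A^2) := by
      apply mul_le_mul_of_nonneg_right (mul_le_mul_of_nonneg_left hLA hs2nn) (by positivity)
    calc (1:ℝ)/A ≤ ‖GaussianInt.toComplex Δ *
          (GaussianInt.toComplex a / GaussianInt.toComplex q) - GaussianInt.toComplex k‖ := hlow
      _ ≤ ‖w‖ + ‖GaussianInt.toComplex Δ * γ‖ := htri
      _ ≤ Real.sqrt 2 * (1/M) + (Real.sqrt 2 * ((L:ℝ)-1)) * ((2+Real.sqrt 2)/A^2) :=
          add_le_add hw_abs hγup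
      _ ≤ _ := add_le_add e1 e2
  have hAne : A ≠ 0 := ne_of_gt hA0
  have rew : Real.sqrt 2 * (1/(4*A)) + (Real.sqrt 2 * (A/10)) * ((2+Real.sqrt 2)/A^2)
      = (Real.sqrt 2/4 + Real.sqrt 2*(2+Real.sqrt 2)/10) * (1/A) := by
    field_simp
  have coeff : Real.sqrt 2/4 + Real.sqrt 2*(2+Real.sqrt 2)/10 < 1 := by nlinarith
  have hfin : Real.sqrt 2 * (1/(4*A)) + (Real.sqrt 2 * (A/10)) * ((2+Real.sqrt 2)/A^2) < 1/A := by
    rw [rew]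
    calc (Real.sqrt 2/4 + Real.sqrt 2*(2+Real.sqrt 2)/10) * (1/A) < 1 * (1/A) :=
        mul_lt_mul_of_pos_right coeff (by positivity)
      _ = 1/A := one_mul _
  linarith
set_option maxHeartbeats 1000000 in
lemma final_numeric (A L M K sz z y4 sy Sg lg : ℝ)
    (hA1 : 1 ≤ A) (hL1 : 1 ≤ L) (hL20 : A/20 ≤ L) (hM0 : 0 ≤ M) (hM8 : M ≤ 8*A)
    (hK0 : 0 ≤ K) (hK : K ≤ sz/L + 1) (hsz0 : 0 ≤ sz) (hsz : sz^2 = z)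
    (hy40 : 0 ≤ y4) (hy4 : y4^2 = sy) (hSg0 : 0 ≤ Sg) (hSg : Sg ≤ 2*y4 + 4*M)
    (hlg : 0.69 ≤ lg) :
    (2*K+3)^2 * (Sg * Sg) ≤ 20000000 * (1 + z/A^2) * (sy + A^2) * lg^2 := by
  have hA0 : (0:ℝ) < A := by linarith
  have hL0 : (0:ℝ) < L := by linarith
  have hz0 : 0 ≤ z := by nlinarith
  have hsy0 : 0 ≤ sy := by nlinarith
  set t := sz/L with ht
  have ht0 : 0 ≤ t := by positivity
  have e1 : t^2 = z/L^2 := by rw [ht, div_pow, hsz]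
  have e2 : z/L^2 ≤ 400*(z/A^2) := by
    rw [show (400:ℝ)*(z/A^2) = (400*z)/A^2 by ring,
        div_le_div_iff₀ (by positivity) (by positivity)]
    have hA20 : A ≤ 20*L := by linarith
    have hAq : A^2 ≤ 400*L^2 := by nlinarith
    calc z * A^2 ≤ z * (400*L^2) := mul_le_mul_of_nonneg_left hAq hz0
      _ = 400*z*L^2 := by ring
    
  have step1 : (2*K+3)^2 ≤ 3200 * (z/A^2) + 50 := by
    have h1 : (2*K+3)^2 ≤ (2*t+5)^2 := by nlinarith
    have h2 : (2*t+5)^2 ≤ 8*t^2 + 50 := by nlinarith [sq_nonneg (2*t-5)]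
    have h3 : 8*t^2 ≤ 3200*(z/A^2) := by
      rw [e1]
      calc 8*(z/L^2) ≤ 8*(400*(z/A^2)) := by linarith
        _ = 3200*(z/A^2) := by ring
    linarith
  have step2 : Sg * Sg ≤ 8*sy + 2048*A^2 := by
    have h1 : Sg * Sg ≤ (2*y4+4*M)^2 := by nlinarith
    have h2 : (2*y4+4*M)^2 ≤ 8*sy + 32*M^2 := by nlinarith [sq_nonneg (2*y4 - 4*M)]
    have h3 : M^2 ≤ 64*A^2 := by nlinarith
    linarith
  have hu0 : 0 ≤ z/A^2 := by positivity
  have hP0 : (0:ℝ) ≤ (2*K+3)^2 := sq_nonneg _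
  have hW0 : (0:ℝ) ≤ Sg * Sg := mul_nonneg hSg0 hSg0
  have hbig : (2*K+3)^2 * (Sg*Sg) ≤ (3200*(1+z/A^2)) * (2048*(sy+A^2)) := by
    have c1 : (2*K+3)^2 ≤ 3200*(1+z/A^2) := by linarith
    have c2 : Sg*Sg ≤ 2048*(sy+A^2) := by linarith
    exact mul_le_mul c1 c2 hW0 (by positivity)
  have hlg2 : (0.4761:ℝ) ≤ lg^2 := by nlinarith
  have hX0 : (0:ℝ) ≤ (1+z/A^2) * (sy+A^2) := by positivity
  calc (2*K+3)^2 * (Sg*Sg) ≤ (3200*(1+z/A^2)) * (2048*(sy+A^2)) := hbig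
    _ = 6553600 * ((1+z/A^2) * (sy+A^2)) := by ring
    _ ≤ (20000000 * 0.4761) * ((1+z/A^2) * (sy+A^2)) := by
        apply mul_le_mul_of_nonneg_right (by norm_num) hX0
    _ ≤ (20000000 * lg^2) * ((1+z/A^2) * (sy+A^2)) := by
        apply mul_le_mul_of_nonneg_right (by nlinarith) hX0
    _ = 20000000 * (1 + z/A^2) * (sy + A^2) * lg^2 := by ring

set_option maxHeartbeats 2000000 in
theorem Gsum_bound :
    ∃ c : ℝ, 0 < c ∧
      ∀ (θ : ℂ) (a q : GaussianInt), q ≠ 0 → IsCoprime a q →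
        ‖θ - GaussianInt.toComplex a / GaussianInt.toComplex q‖ ≤
          (2 + Real.sqrt 2) / absG q ^ 2 →
        ∀ y z : ℝ, 1 ≤ y → 1 ≤ z →
          Gsum θ y z ≤
            c * (1 + z / absG q ^ 2) * (Real.sqrt y + absG q ^ 2) * (Real.log (2 * y)) ^ 2 := by
  refine ⟨20000000, by norm_num, ?_⟩
  intro θ a q hq hco hγ y z hy hz
  have hAdef : absG q = ‖GaussianInt.toComplex q‖ := rfl
  set A := ‖GaussianInt.toComplex q‖ with hA
  rw [hAdef] at hγ ⊢
  have hA1 : 1 ≤ A := abs_toComplex_ge_one q hq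
  have hA0 : (0:ℝ) < A := by linarith
  set L : ℕ := max 1 ⌊A/10⌋₊ with hLdef
  set M : ℕ := 4 * ⌈A⌉₊ with hMdef
  set K : ℕ := ⌈Real.sqrt z / (L:ℝ)⌉₊ with hKdef
  have hL1 : 1 ≤ L := le_max_left _ _
  have hL0R : (0:ℝ) < (L:ℝ) := by exact_mod_cast hL1
  have hLA : (L:ℝ) - 1 ≤ A/10 := by
    have h1 : L ≤ ⌊A/10⌋₊ + 1 := by omega
    have h2 : ((⌊A/10⌋₊ : ℕ):ℝ) ≤ A/10 := Nat.floor_le (by positivity)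
    have h3 : (L:ℝ) ≤ ((⌊A/10⌋₊ : ℕ):ℝ) + 1 := by exact_mod_cast h1
    linarith
  have hL20 : A/20 ≤ (L:ℝ) := by
    rcases le_or_gt A 20 with h | h
    · have h1 : A/20 ≤ 1 := by linarith
      have h2 : (1:ℝ) ≤ (L:ℝ) := by exact_mod_cast hL1
      linarith
    · have h1 : A/10 - 1 < ((⌊A/10⌋₊ : ℕ):ℝ) := Nat.sub_one_lt_floor _
      have h2 : ((⌊A/10⌋₊ : ℕ):ℝ) ≤ (L:ℝ) := by exact_mod_cast le_max_right 1 ⌊A/10⌋₊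
      linarith
  have hM1 : 1 ≤ M := by
    have h1 : 1 ≤ ⌈A⌉₊ := by
      rw [Nat.one_le_ceil_iff]
      linarith
    omega
  have hM0 : 0 < M := hM1
  have hM4 : 4 * A ≤ (M:ℝ) := by
    have h1 : A ≤ (⌈A⌉₊ : ℝ) := Nat.le_ceil A
    have hcast : ((M:ℕ):ℝ) = 4 * ((⌈A⌉₊:ℕ):ℝ) := by rw [hMdef]; push_cast; ring
    rw [hcast]; linarith
  have hM8 : (M:ℝ) ≤ 8 * A := by
    have h1 : ((⌈A⌉₊:ℕ):ℝ) < A + 1 := Nat.ceil_lt_add_one (by positivity)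
    have hcast : ((M:ℕ):ℝ) = 4 * ((⌈A⌉₊:ℕ):ℝ) := by rw [hMdef]; push_cast; ring
    rw [hcast]; linarith
  -- the set S and its finiteness
  have hNm : ∀ n : GaussianInt, Nm n = (n.re:ℝ)^2 + (n.im:ℝ)^2 := by
    intro n
    rw [Nm, Complex.sq_norm, Complex.normSq_apply, toComplex_re' n, toComplex_im' n]
    ring
  have hrebound : ∀ n ∈ {n : GaussianInt | 0 < Nm n ∧ Nm n ≤ z},
      |(n.re:ℝ)| ≤ Real.sqrt z ∧ |(n.im:ℝ)| ≤ Real.sqrt z := by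
    intro n hn
    obtain ⟨-, h2⟩ := hn
    rw [hNm n] at h2
    constructor
    · rw [← Real.sqrt_sq_eq_abs]
      apply Real.sqrt_le_sqrt
      nlinarith [sq_nonneg ((n.im:ℝ))]
    · rw [← Real.sqrt_sq_eq_abs]
      apply Real.sqrt_le_sqrt
      nlinarith [sq_nonneg ((n.re:ℝ))]
  have hS : {n : GaussianInt | 0 < Nm n ∧ Nm n ≤ z}.Finite := by
    set KS : ℕ := ⌈Real.sqrt z⌉₊ with hKS
    have hsub : {n : GaussianInt | 0 < Nm n ∧ Nm n ≤ z} ⊆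
        ↑(((Finset.Icc (-(KS:ℤ)) (KS:ℤ)) ×ˢ (Finset.Icc (-(KS:ℤ)) (KS:ℤ))).image
          (fun p : ℤ × ℤ => (⟨p.1, p.2⟩ : GaussianInt))) := by
      intro n hn
      obtain ⟨h1, h2⟩ := hrebound n hn
      have hszKS : Real.sqrt z ≤ (KS:ℝ) := Nat.le_ceil _
      have hre' : |n.re| ≤ (KS:ℤ) := by exact_mod_cast le_trans h1 hszKS
      have him' : |n.im| ≤ (KS:ℤ) := by exact_mod_cast le_trans h2 hszKS
      refine Finset.mem_coe.2 (Finset.mem_image.2 ⟨(n.re, n.im), ?_, rfl⟩)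
      refine Finset.mem_product.2 ⟨Finset.mem_Icc.2 ?_, Finset.mem_Icc.2 ?_⟩
      · exact abs_le.1 hre'
      · exact abs_le.1 him'
    exact Set.Finite.subset (Finset.finite_toSet _) hsub
  -- the counting map
  set φ : GaussianInt → (ℤ × ℤ) × ℕ × ℕ := fun n =>
    ((n.re / (L:ℤ), n.im / (L:ℤ)),
     (⌊Int.fract ((GaussianInt.toComplex n * θ).im) * M⌋₊,
      ⌊Int.fract ((GaussianInt.toComplex n * θ).re) * M⌋₊)) with hφ
  have hinj : ∀ n n' : GaussianInt, φ n = φ n' → n = n' := by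
    intro n n' h
    rw [hφ] at h
    simp only [Prod.mk.injEq] at h
    obtain ⟨⟨hbre, hbim⟩, hcim, hcre⟩ := h
    exact key_inj θ a q hq hco hγ L M hL1 hLA hM4 n n' hbre hbim hcre hcim
  -- the target finset
  set B2 : Finset (ℤ × ℤ) :=
    (Finset.Icc (-(K:ℤ)-1) ((K:ℤ)+1)) ×ˢ (Finset.Icc (-(K:ℤ)-1) ((K:ℤ)+1)) with hB2
  set T : Finset ((ℤ × ℤ) × ℕ × ℕ) := B2 ×ˢ ((Finset.range M) ×ˢ (Finset.range M)) with hT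
  have hszK : Real.sqrt z ≤ (K:ℝ) * L := by
    have h1 : Real.sqrt z / (L:ℝ) ≤ (K:ℝ) := Nat.le_ceil _
    rw [div_le_iff₀ hL0R] at h1
    exact h1
  have hblockmem : ∀ m : ℤ, |(m:ℝ)| ≤ Real.sqrt z →
      m / (L:ℤ) ∈ Finset.Icc (-(K:ℤ)-1) ((K:ℤ)+1) := by
    intro m hm
    have hL0Z : (0:ℤ) < (L:ℤ) := by exact_mod_cast hL1
    have h1 := Int.mul_ediv_add_emod m (L:ℤ)
    have hr0 : (0:ℤ) ≤ m % (L:ℤ) := Int.emod_nonneg m (ne_of_gt hL0Z)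
    have hrL : m % (L:ℤ) < (L:ℤ) := Int.emod_lt_of_pos m hL0Z
    have hreal : (L:ℝ) * ((m / (L:ℤ) : ℤ):ℝ) + ((m % (L:ℤ) : ℤ):ℝ) = (m:ℝ) := by
      exact_mod_cast h1
    have hr0R : (0:ℝ) ≤ ((m % (L:ℤ) : ℤ):ℝ) := by exact_mod_cast hr0
    have hrLR : ((m % (L:ℤ) : ℤ):ℝ) < (L:ℝ) := by exact_mod_cast hrL
    have hmabs := abs_le.1 hm
    have hupp : ((m / (L:ℤ) : ℤ):ℝ) ≤ (K:ℝ) + 1 := by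
      nlinarith [hmabs.2, hszK]
    have hlow : -(K:ℝ) - 1 ≤ ((m / (L:ℤ) : ℤ):ℝ) := by
      nlinarith [hmabs.1, hszK]
    rw [Finset.mem_Icc]
    constructor
    · exact_mod_cast (by push_cast; linarith : ((-(K:ℤ)-1 : ℤ):ℝ) ≤ ((m / (L:ℤ) : ℤ):ℝ))
    · exact_mod_cast (by push_cast; linarith : ((m / (L:ℤ) : ℤ):ℝ) ≤ (((K:ℤ)+1 : ℤ):ℝ))
  have hmapsub : hS.toFinset.image φ ⊆ T := by
    intro p hp
    obtain ⟨n, hn, rfl⟩ := Finset.mem_image.1 hp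
    have hnS : n ∈ {n : GaussianInt | 0 < Nm n ∧ Nm n ≤ z} := hS.mem_toFinset.1 hn
    obtain ⟨h1, h2⟩ := hrebound n hnS
    rw [hT, hφ]
    refine Finset.mem_product.2 ⟨Finset.mem_product.2 ⟨hblockmem _ h1, hblockmem _ h2⟩,
      Finset.mem_product.2 ⟨Finset.mem_range.2 (cell_lt M hM0 _), Finset.mem_range.2 (cell_lt M hM0 _)⟩⟩
  -- pointwise bound
  have hsqrt_minInv : ∀ t : ℝ, Real.sqrt (minInv t y) ≤ gcell M y ⌊Int.fract t * M⌋₊ := by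
    intro t
    calc Real.sqrt (minInv t y) ≤ Real.sqrt (gcell M y ⌊Int.fract t * M⌋₊ ^ 2) :=
        Real.sqrt_le_sqrt (minInv_le_gcell_sq M hM0 y t)
      _ = gcell M y ⌊Int.fract t * M⌋₊ := Real.sqrt_sq (gcell_nonneg _ _ _)
  set F : (ℤ × ℤ) × ℕ × ℕ → ℝ := fun p => gcell M y p.2.1 * gcell M y p.2.2 with hF
  have hpt : ∀ n : GaussianInt,
      Real.sqrt (minInv ((GaussianInt.toComplex n * θ).im) y) *
        Real.sqrt (minInv ((GaussianInt.toComplex n * θ).re) y) ≤ F (φ n) := by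
    intro n
    rw [hF, hφ]
    exact mul_le_mul (hsqrt_minInv _) (hsqrt_minInv _) (Real.sqrt_nonneg _) (gcell_nonneg _ _ _)
  -- sum manipulations
  set Sg : ℝ := ∑ i ∈ Finset.range M, gcell M y i with hSg
  have hSg0 : 0 ≤ Sg := Finset.sum_nonneg (fun i _ => gcell_nonneg _ _ _)
  have hTsum : ∑ p ∈ T, F p = (B2.card : ℝ) * (Sg * Sg) := by
    rw [hT, Finset.sum_product]
    have hinner : ∀ b : ℤ × ℤ,
        ∑ r ∈ (Finset.range M) ×ˢ (Finset.range M), F (b, r) = Sg * Sg := by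
      intro b
      rw [Finset.sum_product]
      rw [hSg, Finset.sum_mul_sum]
    rw [Finset.sum_congr rfl (fun b _ => hinner b), Finset.sum_const, nsmul_eq_mul]
  have hcard : (B2.card : ℝ) = (2*(K:ℝ)+3)^2 := by
    rw [hB2, Finset.card_product]
    have h1 : (Finset.Icc (-(K:ℤ)-1) ((K:ℤ)+1)).card = 2*K+3 := by
      rw [Int.card_Icc]
      omega
    rw [h1]
    push_cast
    ring
  -- main chain
  have hchain : Gsum θ y z ≤ (2*(K:ℝ)+3)^2 * (Sg * Sg) := by
    calc Gsum θ y z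
        = ∑ n ∈ hS.toFinset,
            Real.sqrt (minInv ((GaussianInt.toComplex n * θ).im) y) *
              Real.sqrt (minInv ((GaussianInt.toComplex n * θ).re) y) := by
          rw [Gsum]
          exact finsum_mem_eq_finite_toFinset_sum _ hS
      _ ≤ ∑ n ∈ hS.toFinset, F (φ n) := Finset.sum_le_sum (fun n _ => hpt n)
      _ = ∑ p ∈ hS.toFinset.image φ, F p :=
          (Finset.sum_image (fun n _ n' _ h => hinj n n' h)).symm
      _ ≤ ∑ p ∈ T, F p := by
          apply Finset.sum_le_sum_of_subset_of_nonneg hmapsub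
          intro p _ _
          exact mul_nonneg (gcell_nonneg _ _ _) (gcell_nonneg _ _ _)
      _ = (B2.card : ℝ) * (Sg * Sg) := hTsum
      _ = (2*(K:ℝ)+3)^2 * (Sg * Sg) := by rw [hcard]
  -- numeric conclusion
  have hz0 : (0:ℝ) ≤ z := by linarith
  have hy0 : (0:ℝ) ≤ y := by linarith
  have hlg : (0.69:ℝ) ≤ Real.log (2*y) := by
    have h1 : (0.6931471803:ℝ) < Real.log 2 := Real.log_two_gt_d9
    have h2 : Real.log 2 ≤ Real.log (2*y) := by
      apply Real.log_le_log (by norm_num)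
      linarith
    linarith
  have hfin := final_numeric A (L:ℝ) (M:ℝ) (K:ℝ) (Real.sqrt z) z
      (Real.sqrt (Real.sqrt y)) (Real.sqrt y) Sg (Real.log (2*y))
      hA1 (by exact_mod_cast hL1) hL20 (by positivity) hM8
      (Nat.cast_nonneg K) (le_of_lt (by
        have := Nat.ceil_lt_add_one (show (0:ℝ) ≤ Real.sqrt z / (L:ℝ) by positivity)
        exact_mod_cast this))
      (Real.sqrt_nonneg z) (Real.sq_sqrt hz0)
      (Real.sqrt_nonneg _) (Real.sq_sqrt (Real.sqrt_nonneg y))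
      hSg0 (by rw [hSg]; exact sum_gcell M hM1 y) hlg
  linarith
end
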